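/- The integral over θ from 0 to 1 of log|1 - e^{2πiθ}| · log|1 + e^{2πiθ}| equals -π²/24. -/

import Mathlib

open Real Complex MeasureTheory Filter Set intervalIntegral

noncomputable def e (θ : ℝ) : ℂ := Complex.exp (2 * π * I * θ)

lemma e_eq (θ : ℝ) : e θ = Complex.exp (((2 * π * θ : ℝ) : ℂ) * I) := by
  unfold e; push_cast; ring_nf

lemma e_re (θ : ℝ) : (e θ).re = Real.cos (2 * π * θ) := by
  rw [e_eq]; exact Complex.exp_ofReal_mul_I_re _

lemma e_im (θ : ℝ) : (e θ).im = Real.sin (2 * π * θ) := by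
  rw [e_eq]; exact Complex.exp_ofReal_mul_I_im _

lemma abs_e (θ : ℝ) : ‖e θ‖ = 1 := by
  rw [e_eq, Complex.norm_exp]; simp

lemma normSq_one_sub_mul (r : ℝ) (θ : ℝ) :
    Complex.normSq (1 - (r : ℂ) * e θ) = (1 - r)^2 + r * (2 - 2 * Real.cos (2 * π * θ)) := by
  have h := abs_e θ
  have h2 : Complex.normSq (e θ) = 1 := by
    rw [← Complex.sq_norm, h]; norm_num
  rw [Complex.normSq_apply] at h2
  rw [Complex.normSq_apply]
  simp only [Complex.sub_re, Complex.sub_im, Complex.one_re, Complex.one_im,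
    Complex.mul_re, Complex.mul_im, Complex.ofReal_re, Complex.ofReal_im, e_re, e_im] at h2 ⊢
  linear_combination (r^2) * h2

lemma normSq_one_add_mul (r : ℝ) (θ : ℝ) :
    Complex.normSq (1 + (r : ℂ) * e θ) = (1 - r)^2 + r * (2 + 2 * Real.cos (2 * π * θ)) := by
  have h2 : Complex.normSq (e θ) = 1 := by
    rw [← Complex.sq_norm, abs_e]; norm_num
  rw [Complex.normSq_apply] at h2
  rw [Complex.normSq_apply]
  simp only [Complex.add_re, Complex.add_im, Complex.one_re, Complex.one_im,
    Complex.mul_re, Complex.mul_im, Complex.ofReal_re, Complex.ofReal_im, e_re, e_im] at h2 ⊢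
  linear_combination (r^2) * h2

lemma two_sub_cos (θ : ℝ) : 2 - 2 * Real.cos (2 * π * θ) = (2 * Real.sin (π * θ))^2 := by
  have : (2:ℝ) * π * θ = 2 * (π * θ) := by ring
  rw [this, Real.cos_two_mul']
  linear_combination (-2) * Real.sin_sq_add_cos_sq (π * θ)

lemma two_add_cos (θ : ℝ) : 2 + 2 * Real.cos (2 * π * θ) = (2 * Real.cos (π * θ))^2 := by
  have : (2:ℝ) * π * θ = 2 * (π * θ) := by ring
  rw [this, Real.cos_two_mul']
  linear_combination (-2) * Real.sin_sq_add_cos_sq (π * θ)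

lemma abs_one_sub_e (θ : ℝ) : ‖1 - e θ‖ = 2 * |Real.sin (π * θ)| := by
  rw [Complex.norm_def]
  have := normSq_one_sub_mul 1 θ
  simp only [Complex.ofReal_one, one_mul] at this
  rw [this, two_sub_cos]
  simp [Real.sqrt_sq_eq_abs, abs_mul]

lemma abs_one_add_e (θ : ℝ) : ‖1 + e θ‖ = 2 * |Real.cos (π * θ)| := by
  rw [Complex.norm_def]
  have := normSq_one_add_mul 1 θ
  simp only [Complex.ofReal_one, one_mul] at this
  rw [this, two_add_cos]
  simp [Real.sqrt_sq_eq_abs, abs_mul]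

-- η(2)
lemma eta2 : HasSum (fun n : ℕ => (-1:ℝ)^n / (n:ℝ)^2) (-(π^2/12)) := by
  have h6 : HasSum (fun n : ℕ => 1 / (n:ℝ)^2) (π^2/6) := hasSum_zeta_two
  have hEven : HasSum (fun n : ℕ => (2:ℝ) / ((2*n : ℕ):ℝ)^2) (π^2/12) := by
    have h := h6.mul_left (1/2)
    have : (1/2 : ℝ) * (π^2/6) = π^2/12 := by ring
    rw [this] at h
    replace h : HasSum (fun n : ℕ => (1/2:ℝ) * (1 / (n:ℝ)^2)) (π^2/12) := h
    convert h using 2 with n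
    push_cast
    rcases Nat.eq_zero_or_pos n with rfl | hn
    · simp
    · have : ((n:ℝ)) ≠ 0 := Nat.cast_ne_zero.mpr hn.ne'
      field_simp
  set g : ℕ → ℝ := fun m => if Even m then 2/(m:ℝ)^2 else 0 with hg
  have hginj : Function.Injective (fun n : ℕ => 2*n) := fun a b h => by
    simpa using h
  have hgsum : HasSum g (π^2/12) := by
    rw [← Function.Injective.hasSum_iff hginj (by
      intro m hm
      simp only [hg]
      rw [if_neg]
      intro ⟨c, hc⟩
      exact hm ⟨c, show 2*c = m by omega⟩)]
    convert hEven using 1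
    funext n
    simp only [Function.comp_apply, hg, if_pos (even_two_mul n)]
  have halt : HasSum (fun n : ℕ => (-1:ℝ)^n / (n:ℝ)^2) (π^2/12 - π^2/6) := by
    have h := hgsum.sub h6
    replace h : HasSum (fun b => g b - 1/(b:ℝ)^2) (π^2/12 - π^2/6) := h
    convert h using 2 with n
    rcases Nat.even_or_odd n with he | ho
    · rw [hg]; simp only [if_pos he, he.neg_one_pow]; ring
    · rw [hg]; simp only [if_neg (Nat.not_even_iff_odd.mpr ho), ho.neg_one_pow]; ring
  convert halt using 1; ring

-- upper bound 2 for abs(1 ± r e θ)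
lemma abs_le_two {r : ℝ} (hr0 : 0 ≤ r) (hr1 : r ≤ 1) (z : ℂ) (θ : ℝ) (hz : z = e θ ∨ z = - e θ) :
    ‖1 - (r : ℂ) * z‖ ≤ 2 := by
  have habs : ‖z‖ = 1 := by
    rcases hz with rfl | rfl
    · exact abs_e θ
    · rw [norm_neg]; exact abs_e θ
  calc ‖1 - (r:ℂ)*z‖ ≤ ‖(1:ℂ)‖ + ‖(r:ℂ)*z‖ := by
        simpa using norm_sub_le 1 ((r:ℂ)*z)
    _ ≤ 2 := by simp [map_mul, habs, Complex.norm_real, _root_.abs_of_nonneg hr0]; linarith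

-- lower bound: |1 - r z| ≥ |1 - z|/2 when 1/2 ≤ r ≤ 1, |z| = 1
lemma abs_ge_half {r : ℝ} (hr0 : 1/2 ≤ r) (hr1 : r ≤ 1) (z : ℂ) (hz : ‖z‖ = 1) :
    ‖1 - z‖ / 2 ≤ ‖1 - (r : ℂ) * z‖ := by
  have h2 : Complex.normSq z = 1 := by rw [← Complex.sq_norm, hz]; norm_num
  have hre : z.re ≤ 1 := by
    nlinarith [Complex.normSq_apply z ▸ h2, sq_nonneg z.im]
  have e1 : Complex.normSq (1 - (r:ℂ)*z) = (1-r)^2 + r * (2 - 2*z.re) := by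
    rw [Complex.normSq_apply] at h2 ⊢
    simp only [Complex.sub_re, Complex.sub_im, Complex.one_re, Complex.one_im,
      Complex.mul_re, Complex.mul_im, Complex.ofReal_re, Complex.ofReal_im]
    linear_combination (r^2) * h2
  have e2 : Complex.normSq (1 - z) = 2 - 2*z.re := by
    rw [Complex.normSq_apply] at h2 ⊢
    simp only [Complex.sub_re, Complex.sub_im, Complex.one_re, Complex.one_im]
    linear_combination h2
  have k1 : (‖1 - z‖)^2 = 2 - 2*z.re := by rw [Complex.sq_norm, e2]
  have k2 : (‖1 - (r:ℂ)*z‖)^2 = (1-r)^2 + r*(2-2*z.re) := by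
    rw [Complex.sq_norm, e1]
  nlinarith [norm_nonneg (1 - z), norm_nonneg (1 - (r:ℂ)*z),
    sq_nonneg (1 - r)]

-- the log bound
lemma log_abs_bound {r : ℝ} (hr0 : 1/2 ≤ r) (hr1 : r ≤ 1) (z : ℂ) (θ : ℝ)
    (hz : z = e θ ∨ z = - e θ) (hs : ‖1 - z‖ ≠ 0) :
    |Real.log (‖1 - (r : ℂ) * z‖)| ≤ |Real.log (‖1 - z‖)| + Real.log 2 := by
  have habs : ‖z‖ = 1 := by
    rcases hz with rfl | rfl
    · exact abs_e θ
    · rw [norm_neg]; exact abs_e θ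
  set s := ‖1 - z‖ with hsdef
  set t := ‖1 - (r:ℂ)*z‖ with htdef
  have hs0 : 0 < s := lt_of_le_of_ne (norm_nonneg _) (Ne.symm hs)
  have hts : s/2 ≤ t := abs_ge_half hr0 hr1 z habs
  have ht0 : 0 < t := lt_of_lt_of_le (by linarith) hts
  have ht2 : t ≤ 2 := abs_le_two (by linarith) hr1 z θ hz
  have hup : Real.log t ≤ Real.log 2 := Real.log_le_log ht0 ht2
  have hlow : Real.log s - Real.log 2 ≤ Real.log t := by
    have := Real.log_le_log (by linarith : (0:ℝ) < s/2) hts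
    rwa [Real.log_div hs0.ne' two_ne_zero] at this
  rw [abs_le]
  constructor
  · have := neg_abs_le (Real.log s)
    linarith
  · have := Real.log_nonneg (by norm_num : (1:ℝ) ≤ 2)
    have := abs_nonneg (Real.log s)
    linarith

lemma intcosZ (m : ℤ) : (∫ θ in (0:ℝ)..1, Real.cos (2*π*m*θ)) = if m = 0 then 1 else 0 := by
  by_cases hm : m = 0
  · simp [hm]
  · rw [if_neg hm]
    have hc : (2*π*(m:ℝ)) ≠ 0 := by
      have := Real.pi_ne_zero
      have : (m:ℝ) ≠ 0 := Int.cast_ne_zero.mpr hm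
      positivity
    have h1 : (∫ θ in (0:ℝ)..1, Real.cos (2*π*m*θ))
        = ∫ θ in (0:ℝ)..1, Real.cos ((2*π*(m:ℝ)) * θ) := by norm_num
    rw [h1, intervalIntegral.integral_comp_mul_left Real.cos hc]
    simp only [mul_zero, mul_one]
    rw [integral_cos]
    have : Real.sin (2*π*(m:ℝ)) = 0 := by
      have : (2*π*(m:ℝ)) = ((2*m : ℤ):ℝ) * π := by push_cast; ring
      rw [this, Real.sin_int_mul_pi]
    simp [this]

lemma coscos (x y : ℝ) : Real.cos x * Real.cos y = (Real.cos (x+y) + Real.cos (x-y))/2 := by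
  rw [Real.cos_add, Real.cos_sub]; ring

lemma integral_cos_cos (j k : ℕ) :
    (∫ θ in (0:ℝ)..1, Real.cos (2*π*j*θ) * Real.cos (2*π*k*θ))
      = if j = k then (if j = 0 then 1 else 1/2) else 0 := by
  have h : ∀ θ:ℝ, Real.cos (2*π*j*θ) * Real.cos (2*π*k*θ)
      = (Real.cos (2*π*(((j:ℤ)+k : ℤ):ℝ)*θ) + Real.cos (2*π*(((j:ℤ)-k : ℤ):ℝ)*θ))/2 := by
    intro θ; rw [coscos]; push_cast; ring_nf
  have hint : ∀ m : ℤ, IntervalIntegrable (fun θ:ℝ => Real.cos (2*π*(m:ℝ)*θ)) volume 0 1 :=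
    fun m => (Real.continuous_cos.comp (by continuity)).intervalIntegrable 0 1
  simp only [h]
  rw [intervalIntegral.integral_div, intervalIntegral.integral_add (hint _) (hint _),
    intcosZ, intcosZ]
  by_cases hjk : j = k
  · subst hjk
    by_cases hj : j = 0
    · subst hj; norm_num
    · rw [if_pos rfl, if_neg hj, if_neg (by exact_mod_cast (by omega : ¬((j:ℤ)+j = 0))),
        if_pos (by omega)]
      norm_num
  · rw [if_neg hjk, if_neg (by omega : ¬((j:ℤ)+k = 0)), if_neg (by
      intro hh
      exact hjk (by omega)), ]
    norm_num

lemma cont_e : Continuous e := by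
  unfold e
  exact Complex.continuous_exp.comp (by continuity)

lemma pow_e (j : ℕ) (θ : ℝ) : (e θ)^j = Complex.exp (((2*π*(j:ℝ)*θ : ℝ):ℂ) * I) := by
  rw [e_eq, ← Complex.exp_nat_mul]
  congr 1; push_cast; ring

lemma re_term (r : ℝ) (j : ℕ) (θ : ℝ) :
    ((((r:ℂ) * e θ)^j / j) : ℂ).re = (r^j / j) * Real.cos (2*π*(j:ℝ)*θ) := by
  rw [mul_pow, pow_e]
  have h : ((r:ℂ)^j * Complex.exp (((2*π*(j:ℝ)*θ : ℝ):ℂ) * I)) / (j:ℂ)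
      = (((r^j/j : ℝ)):ℂ) * Complex.exp (((2*π*(j:ℝ)*θ : ℝ):ℂ) * I) := by
    push_cast; ring
  rw [h, Complex.re_ofReal_mul, Complex.exp_ofReal_mul_I_re]

lemma re_term_neg (r : ℝ) (k : ℕ) (θ : ℝ) :
    (((-((r:ℂ) * e θ))^k / k) : ℂ).re = (-1:ℝ)^k * ((r^k / k) * Real.cos (2*π*(k:ℝ)*θ)) := by
  rw [neg_pow]
  have h : ((-1:ℂ)^k * ((r:ℂ) * e θ)^k) / (k:ℂ) = ((-1:ℝ)^k : ℝ) * ((((r:ℂ) * e θ)^k / k)) := by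
    push_cast; ring
  rw [h, Complex.re_ofReal_mul, re_term]

lemma hasSum_log_re {z : ℂ} (hz : ‖z‖ < 1) :
    HasSum (fun j : ℕ => ((z^j / j : ℂ)).re) (-(Real.log (‖1 - z‖))) := by
  have h := Complex.hasSum_taylorSeries_neg_log hz
  have h2 := h.mapL Complex.reCLM
  simpa [Complex.log_re] using h2

lemma summable_norm_re {z : ℂ} (hz : ‖z‖ < 1) :
    Summable (fun j : ℕ => ‖((z^j / j : ℂ)).re‖) := by
  refine Summable.of_nonneg_of_le (fun j => norm_nonneg _) (fun j => ?_)
    (summable_geometric_of_lt_one (norm_nonneg z) hz)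
  calc ‖((z^j / j : ℂ)).re‖ ≤ ‖z^j / j‖ := Complex.abs_re_le_norm _
    _ = ‖z‖^j / ‖(j:ℂ)‖ := by rw [norm_div, norm_pow]
    _ ≤ ‖z‖^j := by
        rcases Nat.eq_zero_or_pos j with rfl | hj
        · simp
        · apply div_le_self (by positivity)
          simp only [Complex.norm_natCast]
          exact_mod_cast hj
-- each term's integral
lemma integral_term {r : ℝ} (j k : ℕ) :
    (∫ θ in (0:ℝ)..1,
        ((((r:ℂ) * e θ)^j / j) : ℂ).re * (((-((r:ℂ) * e θ))^k / k) : ℂ).re)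
      = if j = k then (-1:ℝ)^j * r^(2*j) / (2*(j:ℝ)^2) else 0 := by
  have hrw : ∀ θ : ℝ, ((((r:ℂ) * e θ)^j / j) : ℂ).re * (((-((r:ℂ) * e θ))^k / k) : ℂ).re
      = ((-1:ℝ)^k * (r^j/j) * (r^k/k)) * (Real.cos (2*π*(j:ℝ)*θ) * Real.cos (2*π*(k:ℝ)*θ)) := by
    intro θ; rw [re_term, re_term_neg]; ring
  simp only [hrw]
  rw [intervalIntegral.integral_const_mul, integral_cos_cos]
  by_cases hjk : j = k
  · subst hjk
    rw [if_pos rfl, if_pos rfl]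
    by_cases hj : j = 0
    · subst hj; norm_num
    · rw [if_neg hj]
      have hj' : ((j:ℝ)) ≠ 0 := Nat.cast_ne_zero.mpr hj
      rw [two_mul, pow_add]
      field_simp
  · rw [if_neg hjk, if_neg hjk, mul_zero]

lemma main_r {r : ℝ} (hr0 : 0 ≤ r) (hr1 : r < 1) :
    (∫ θ in (0:ℝ)..1,
        Real.log (‖1 - (r:ℂ) * e θ‖) * Real.log (‖1 + (r:ℂ) * e θ‖))
      = ∑' j : ℕ, (-1:ℝ)^j * r^(2*j) / (2*(j:ℝ)^2) := by
  set w : ℝ → ℂ := fun θ => (r:ℂ) * e θ with hw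
  have hnorm : ∀ θ, ‖w θ‖ = r := by
    intro θ
    rw [hw]
    simp only [norm_mul, Complex.norm_real, Real.norm_eq_abs, _root_.abs_of_nonneg hr0]
    rw [show ‖e θ‖ = 1 from abs_e θ, mul_one]
  have hwlt : ∀ θ, ‖w θ‖ < 1 := fun θ => by rw [hnorm]; exact hr1
  have hwneg : ∀ θ, ‖-(w θ)‖ < 1 := fun θ => by rw [norm_neg]; exact hwlt θ
  -- pointwise HasSum of the product
  have hpt : ∀ θ : ℝ, HasSum (fun p : ℕ×ℕ => ((w θ)^p.1 / p.1 : ℂ).re * ((-(w θ))^p.2 / p.2 : ℂ).re)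
      (Real.log (‖1 - w θ‖) * Real.log (‖1 + w θ‖)) := by
    intro θ
    have h1 := (hasSum_log_re (hwlt θ)).neg
    have h2 := (hasSum_log_re (hwneg θ)).neg
    rw [sub_neg_eq_add] at h2
    have hs : Summable fun p : ℕ×ℕ =>
        (-((w θ)^p.1 / p.1 : ℂ).re) * (-((-(w θ))^p.2 / p.2 : ℂ).re) := by
      apply summable_mul_of_summable_norm (f := fun j : ℕ => -((w θ)^j / j : ℂ).re)
        (g := fun k : ℕ => -((-(w θ))^k / k : ℂ).re)
      · simpa using summable_norm_re (hwlt θ)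
      · simpa using summable_norm_re (hwneg θ)
    have := h1.mul h2 hs
    simpa [neg_mul_neg] using this
  -- rewrite integrand as a tsum
  have hrw : ∀ θ : ℝ, Real.log (‖1 - w θ‖) * Real.log (‖1 + w θ‖)
      = ∑' p : ℕ×ℕ, ((w θ)^p.1 / p.1 : ℂ).re * ((-(w θ))^p.2 / p.2 : ℂ).re :=
    fun θ => ((hpt θ).tsum_eq).symm
  rw [intervalIntegral.integral_of_le (by norm_num : (0:ℝ) ≤ 1)]
  refine (MeasureTheory.integral_congr_ae (Filter.Eventually.of_forall hrw)).trans ?_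
  -- swap integral and tsum
  have hcont : ∀ p : ℕ×ℕ, Continuous (fun θ : ℝ =>
      ((w θ)^p.1 / p.1 : ℂ).re * ((-(w θ))^p.2 / p.2 : ℂ).re) := by
    intro p
    apply Continuous.mul
    · exact Complex.continuous_re.comp (((continuous_const.mul cont_e).pow p.1).div_const _)
    · exact Complex.continuous_re.comp ((((continuous_const.mul cont_e).neg).pow p.2).div_const _)
  have hA : ∀ (m : ℕ) (z : ℂ), ‖z‖ = r → ‖((z^m / m : ℂ)).re‖ ≤ r^m := by
    intro m z hz
    calc ‖((z^m / m : ℂ)).re‖ ≤ ‖z^m / m‖ := Complex.abs_re_le_norm _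
      _ = ‖z‖^m / ‖(m:ℂ)‖ := by rw [norm_div, norm_pow]
      _ ≤ ‖z‖^m := by
          rcases Nat.eq_zero_or_pos m with h0 | hm
          · simp [h0]
          · apply div_le_self (by positivity)
            simp only [Complex.norm_natCast]
            exact_mod_cast hm
      _ = r^m := by rw [hz]
  have hbound : ∀ (p : ℕ×ℕ) (θ : ℝ),
      ‖((w θ)^p.1 / p.1 : ℂ).re * ((-(w θ))^p.2 / p.2 : ℂ).re‖ ≤ r^p.1 * r^p.2 := by
    intro p θ
    rw [norm_mul]
    exact mul_le_mul (hA p.1 _ (hnorm θ)) (hA p.2 _ (by rw [norm_neg]; exact hnorm θ))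
      (norm_nonneg _) (by positivity)
  have hsumgeo : Summable (fun p : ℕ×ℕ => r^p.1 * r^p.2) := by
    apply summable_mul_of_summable_norm (f := fun j : ℕ => r^j) (g := fun k : ℕ => r^k) <;>
      · simpa [Real.norm_eq_abs] using (summable_geometric_of_lt_one hr0 hr1).abs
  rw [MeasureTheory.integral_tsum (fun p => ((hcont p).aestronglyMeasurable))]
  · -- identify each term
    have hterm : ∀ p : ℕ×ℕ, (∫ θ in Ioc (0:ℝ) 1, ((w θ)^p.1 / p.1 : ℂ).re * ((-(w θ))^p.2 / p.2 : ℂ).re)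
        = if p.1 = p.2 then (-1:ℝ)^p.1 * r^(2*p.1) / (2*(p.1:ℝ)^2) else 0 := by
      intro p
      rw [← intervalIntegral.integral_of_le (by norm_num : (0:ℝ) ≤ 1)]
      exact integral_term p.1 p.2
    simp only [hterm]
    -- diagonal tsum
    apply tsum_eq_tsum_of_hasSum_iff_hasSum
    intro a
    have hinj : Function.Injective (fun j : ℕ => ((j,j) : ℕ×ℕ)) := fun a b h => by
      simpa using congrArg Prod.fst h
    have hvan : ∀ p : ℕ×ℕ, p ∉ Set.range (fun j : ℕ => ((j,j) : ℕ×ℕ)) →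
        (if p.1 = p.2 then (-1:ℝ)^p.1 * r^(2*p.1) / (2*(p.1:ℝ)^2) else 0) = 0 := by
      intro p hp
      rw [if_neg]
      intro h
      exact hp ⟨p.1, Prod.ext rfl h⟩
    have hcomp : ((fun p : ℕ×ℕ => if p.1 = p.2 then (-1:ℝ)^p.1 * r^(2*p.1) / (2*(p.1:ℝ)^2) else 0)
        ∘ (fun j : ℕ => ((j,j) : ℕ×ℕ))) = fun j : ℕ => (-1:ℝ)^j * r^(2*j) / (2*(j:ℝ)^2) := by
      funext j; simp
    rw [← Function.Injective.hasSum_iff hinj hvan, hcomp]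
  · -- lintegral bound
    have hC : ∀ p : ℕ×ℕ, (∫⁻ θ in Ioc (0:ℝ) 1,
        ‖((w θ)^p.1 / p.1 : ℂ).re * ((-(w θ))^p.2 / p.2 : ℂ).re‖₊)
        ≤ ENNReal.ofReal (r^p.1 * r^p.2) := by
      intro p
      calc (∫⁻ θ in Ioc (0:ℝ) 1, ‖((w θ)^p.1 / p.1 : ℂ).re * ((-(w θ))^p.2 / p.2 : ℂ).re‖₊)
          ≤ ∫⁻ _ in Ioc (0:ℝ) 1, ENNReal.ofReal (r^p.1 * r^p.2) := by
            apply MeasureTheory.lintegral_mono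
            intro θ
            dsimp only
            rw [← ENNReal.ofReal_coe_nnreal, coe_nnnorm]
            exact ENNReal.ofReal_le_ofReal (hbound p θ)
        _ = ENNReal.ofReal (r^p.1 * r^p.2) * volume (Ioc (0:ℝ) 1) := by
            rw [MeasureTheory.setLIntegral_const]
        _ ≤ ENNReal.ofReal (r^p.1 * r^p.2) := by
            rw [Real.volume_Ioc]
            norm_num
    refine ne_top_of_le_ne_top ?_ (ENNReal.tsum_le_tsum hC)
    simp_rw [ENNReal.ofReal]
    rw [ENNReal.tsum_coe_ne_top_iff_summable]
    exact hsumgeo.toNNReal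

lemma log_sq_le {x : ℝ} (hx : 0 < x) (hx2 : x ≤ 2) :
    (Real.log x)^2 ≤ 16 * x^(-(2⁻¹:ℝ)) + 1 := by
  by_cases h1 : 1 ≤ x
  · have hl0 : 0 ≤ Real.log x := Real.log_nonneg h1
    have hl2 : Real.log x ≤ Real.log 2 := Real.log_le_log hx hx2
    have h2 := Real.log_two_lt_d9
    have hrp : 0 ≤ 16 * x^(-(2⁻¹:ℝ)) := by positivity
    nlinarith
  · push_neg at h1
    set y := x ^ (-(4⁻¹):ℝ) with hy
    have hy0 : 0 < y := Real.rpow_pos_of_pos hx _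
    have hy1 : 1 ≤ y :=
      Real.one_le_rpow_of_pos_of_le_one_of_nonpos hx h1.le (by norm_num)
    have hlog : Real.log y = -(4⁻¹) * Real.log x := Real.log_rpow hx _
    have hsq : y^2 = x^(-(2⁻¹:ℝ)) := by
      rw [hy, ← Real.rpow_natCast (x ^ (-(4⁻¹):ℝ)) 2, ← Real.rpow_mul hx.le]
      norm_num
    have hly : Real.log y ≤ y := (Real.log_le_sub_one_of_pos hy0).trans (by linarith)
    have hly0 : 0 ≤ Real.log y := Real.log_nonneg hy1
    have hh : (Real.log x)^2 = 16 * (Real.log y)^2 := by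
      have : Real.log x = -4 * Real.log y := by rw [hlog]; ring
      rw [this]; ring
    rw [hh, ← hsq]
    nlinarith

lemma logsq_chain {x t : ℝ} (ht : 0 < t) (hxt : 4*t ≤ x) (hx2 : x ≤ 2) :
    (Real.log x)^2 ≤ 8 * t^(-(2⁻¹:ℝ)) + 1 := by
  have hx0 : 0 < x := lt_of_lt_of_le (by linarith) hxt
  have h1 := log_sq_le hx0 hx2
  have h2 : x^(-(2⁻¹:ℝ)) ≤ (4*t)^(-(2⁻¹:ℝ)) :=
    rpow_le_rpow_of_nonpos (by linarith) hxt (by norm_num)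
  have h4 : ((4:ℝ))^(-(2⁻¹:ℝ)) = 1/2 := by
    rw [show (4:ℝ) = 2^(2:ℕ) by norm_num, ← Real.rpow_natCast 2 2,
      ← Real.rpow_mul (by norm_num : (0:ℝ) ≤ 2)]
    norm_num [Real.rpow_neg_one]
  have h3 : (4*t)^(-(2⁻¹:ℝ)) = (1/2) * t^(-(2⁻¹:ℝ)) := by
    rw [Real.mul_rpow (by norm_num) ht.le, h4]
  have ht2 : 0 ≤ t^(-(2⁻¹:ℝ)) := Real.rpow_nonneg ht.le _
  nlinarith

lemma sin_lb {t : ℝ} (h0 : 0 ≤ t) (h1 : t ≤ 1/2) : 2*t ≤ Real.sin (π*t) := by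
  have hπ := Real.pi_pos
  have h := Real.mul_le_sin (x := π*t) (by positivity) (by nlinarith)
  calc 2*t = 2/π * (π*t) := by field_simp
    _ ≤ Real.sin (π*t) := h

lemma abs_one_sub_e_le (θ : ℝ) : ‖1 - e θ‖ ≤ 2 := by
  calc ‖1 - e θ‖ ≤ ‖(1:ℂ)‖ + ‖e θ‖ :=
        norm_sub_le 1 (e θ)
    _ = 2 := by rw [abs_e]; norm_num

lemma abs_one_add_e_le (θ : ℝ) : ‖1 + e θ‖ ≤ 2 := by
  calc ‖1 + e θ‖ ≤ ‖(1:ℂ)‖ + ‖e θ‖ := norm_add_le _ _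
    _ = 2 := by rw [abs_e]; norm_num

lemma measF : Measurable (fun θ : ℝ => Real.log (‖1 - e θ‖)) :=
  Real.measurable_log.comp (continuous_norm.comp (continuous_const.sub cont_e)).measurable

lemma measG : Measurable (fun θ : ℝ => Real.log (‖1 + e θ‖)) :=
  Real.measurable_log.comp (continuous_norm.comp (continuous_const.add cont_e)).measurable

lemma intF2 : MeasureTheory.IntegrableOn
    (fun θ : ℝ => (Real.log (‖1 - e θ‖))^2) (Ioc (0:ℝ) 1) volume := by
  have hsplit : Ioc (0:ℝ) 1 = Ioc (0:ℝ) (1/2) ∪ Ioc (1/2:ℝ) 1 :=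
    (Ioc_union_Ioc_eq_Ioc (by norm_num) (by norm_num)).symm
  rw [hsplit]
  apply MeasureTheory.IntegrableOn.union
  · -- near 0
    have hg : MeasureTheory.IntegrableOn (fun θ : ℝ => 8 * θ^(-(2⁻¹:ℝ)) + 1)
        (Ioc (0:ℝ) (1/2)) volume := by
      have h := (intervalIntegral.intervalIntegrable_rpow'
        (a := 0) (b := 1/2) (by norm_num : (-1:ℝ) < -(2⁻¹)))
      have h2 := (h.const_mul 8).add (_root_.intervalIntegrable_const (c := (1:ℝ)))
      rwa [intervalIntegrable_iff_integrableOn_Ioc_of_le (by norm_num)] at h2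
    apply hg.integrable.mono' ((measF.pow_const 2).aestronglyMeasurable)
    rw [MeasureTheory.ae_restrict_iff' measurableSet_Ioc]
    apply MeasureTheory.ae_of_all
    intro θ hθ
    obtain ⟨h0, h12⟩ := hθ
    have hsin : 2*θ ≤ Real.sin (π*θ) := sin_lb h0.le h12
    have habs : ‖1 - e θ‖ = 2 * Real.sin (π*θ) := by
      rw [abs_one_sub_e, _root_.abs_of_nonneg (by linarith)]
    rw [Real.norm_eq_abs, _root_.abs_of_nonneg (sq_nonneg _)]
    apply logsq_chain h0 ?_ (abs_one_sub_e_le θ)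
    rw [habs]; linarith
  · -- near 1
    have hg : MeasureTheory.IntegrableOn (fun θ : ℝ => 8 * (1-θ)^(-(2⁻¹:ℝ)) + 1)
        (Ioc (1/2:ℝ) 1) volume := by
      have h := (intervalIntegral.intervalIntegrable_rpow'
        (a := 0) (b := 1/2) (by norm_num : (-1:ℝ) < -(2⁻¹)))
      have h1 := (h.comp_sub_left 1).symm
      rw [show (1:ℝ)-1/2 = 1/2 by norm_num, show (1:ℝ)-0 = 1 by norm_num] at h1
      have h2 := (h1.const_mul 8).add (_root_.intervalIntegrable_const (c := (1:ℝ)))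
      rwa [intervalIntegrable_iff_integrableOn_Ioc_of_le (by norm_num)] at h2
    apply hg.integrable.mono' ((measF.pow_const 2).aestronglyMeasurable)
    rw [MeasureTheory.ae_restrict_iff' measurableSet_Ioc]
    apply MeasureTheory.ae_of_all
    intro θ hθ
    obtain ⟨h12, h1⟩ := hθ
    rw [Real.norm_eq_abs, _root_.abs_of_nonneg (sq_nonneg _)]
    by_cases hθ1 : θ = 1
    · subst hθ1
      have : ‖1 - e 1‖ = 0 := by
        rw [abs_one_sub_e]; simp [Real.sin_pi]
      rw [this, Real.log_zero]
      have : ((1:ℝ)-1)^(-(2⁻¹:ℝ)) = 0 := by norm_num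
      rw [this]; norm_num
    · have hlt : θ < 1 := lt_of_le_of_ne h1 hθ1
      have ht : 0 < 1 - θ := by linarith
      have hsin : 2*(1-θ) ≤ Real.sin (π*(1-θ)) := sin_lb ht.le (by linarith)
      have heq : Real.sin (π*(1-θ)) = Real.sin (π*θ) := by
        rw [show π*(1-θ) = π - π*θ by ring, Real.sin_pi_sub]
      have habs : ‖1 - e θ‖ = 2 * Real.sin (π*θ) := by
        rw [abs_one_sub_e, _root_.abs_of_nonneg (by rw [← heq]; linarith)]
      apply logsq_chain ht ?_ (abs_one_sub_e_le θ)
      rw [habs, ← heq]; linarith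

lemma intG2 : MeasureTheory.IntegrableOn
    (fun θ : ℝ => (Real.log (‖1 + e θ‖))^2) (Ioc (0:ℝ) 1) volume := by
  have hsplit : Ioc (0:ℝ) 1 = Ioc (0:ℝ) (1/2) ∪ Ioc (1/2:ℝ) 1 :=
    (Ioc_union_Ioc_eq_Ioc (by norm_num) (by norm_num)).symm
  rw [hsplit]
  apply MeasureTheory.IntegrableOn.union
  · -- near 1/2 from the left
    have hg : MeasureTheory.IntegrableOn (fun θ : ℝ => 8 * (1/2-θ)^(-(2⁻¹:ℝ)) + 1)
        (Ioc (0:ℝ) (1/2)) volume := by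
      have h := (intervalIntegral.intervalIntegrable_rpow'
        (a := 0) (b := 1/2) (by norm_num : (-1:ℝ) < -(2⁻¹)))
      have h1 := (h.comp_sub_left (1/2)).symm
      rw [show (1:ℝ)/2-1/2 = 0 by norm_num, show (1:ℝ)/2-0 = 1/2 by norm_num] at h1
      have h2 := (h1.const_mul 8).add (_root_.intervalIntegrable_const (c := (1:ℝ)))
      rwa [intervalIntegrable_iff_integrableOn_Ioc_of_le (by norm_num)] at h2
    apply hg.integrable.mono' ((measG.pow_const 2).aestronglyMeasurable)
    rw [MeasureTheory.ae_restrict_iff' measurableSet_Ioc]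
    apply MeasureTheory.ae_of_all
    intro θ hθ
    obtain ⟨h0, h12⟩ := hθ
    rw [Real.norm_eq_abs, _root_.abs_of_nonneg (sq_nonneg _)]
    by_cases hθh : θ = 1/2
    · subst hθh
      have : ‖1 + e (1/2)‖ = 0 := by
        rw [abs_one_add_e, show π*((1:ℝ)/2) = π/2 by ring, Real.cos_pi_div_two]
        norm_num
      rw [this, Real.log_zero]
      have : ((1:ℝ)/2-1/2)^(-(2⁻¹:ℝ)) = 0 := by norm_num
      rw [this]; norm_num
    · have hlt : θ < 1/2 := lt_of_le_of_ne h12 hθh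
      have ht : 0 < 1/2 - θ := by linarith
      have hsin : 2*(1/2-θ) ≤ Real.sin (π*(1/2-θ)) := sin_lb ht.le (by linarith)
      have heq : Real.sin (π*(1/2-θ)) = Real.cos (π*θ) := by
        rw [show π*(1/2-θ) = π/2 - π*θ by ring, Real.sin_pi_div_two_sub]
      have habs : ‖1 + e θ‖ = 2 * Real.cos (π*θ) := by
        rw [abs_one_add_e, _root_.abs_of_nonneg (by rw [← heq]; linarith)]
      apply logsq_chain ht ?_ (abs_one_add_e_le θ)
      rw [habs, ← heq]; linarith
  · -- near 1/2 from the right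
    have hg : MeasureTheory.IntegrableOn (fun θ : ℝ => 8 * (θ-1/2)^(-(2⁻¹:ℝ)) + 1)
        (Ioc (1/2:ℝ) 1) volume := by
      have h := (intervalIntegral.intervalIntegrable_rpow'
        (a := 0) (b := 1/2) (by norm_num : (-1:ℝ) < -(2⁻¹)))
      have h1 := h.comp_sub_right (1/2)
      rw [show (0:ℝ)+1/2 = 1/2 by norm_num, show (1:ℝ)/2+1/2 = 1 by norm_num] at h1
      have h2 := (h1.const_mul 8).add (_root_.intervalIntegrable_const (c := (1:ℝ)))
      rwa [intervalIntegrable_iff_integrableOn_Ioc_of_le (by norm_num)] at h2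
    apply hg.integrable.mono' ((measG.pow_const 2).aestronglyMeasurable)
    rw [MeasureTheory.ae_restrict_iff' measurableSet_Ioc]
    apply MeasureTheory.ae_of_all
    intro θ hθ
    obtain ⟨h12, h1⟩ := hθ
    rw [Real.norm_eq_abs, _root_.abs_of_nonneg (sq_nonneg _)]
    have ht : 0 < θ - 1/2 := by linarith
    have hsin : 2*(θ-1/2) ≤ Real.sin (π*(θ-1/2)) := sin_lb ht.le (by linarith)
    have heq : Real.sin (π*(θ-1/2)) = -Real.cos (π*θ) := by
      rw [show π*(θ-1/2) = π*θ - π/2 by ring, Real.sin_sub_pi_div_two]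
    have habs : ‖1 + e θ‖ = 2 * (-Real.cos (π*θ)) := by
      rw [abs_one_add_e]
      congr 1
      rw [abs_of_nonpos (by rw [← neg_nonneg, ← heq]; linarith)]
    apply logsq_chain ht ?_ (abs_one_add_e_le θ)
    rw [habs, ← heq]; linarith

lemma prod_bound {x y a b : ℝ} (h1 : |x| ≤ |a| + Real.log 2) (h2 : |y| ≤ |b| + Real.log 2) :
    |x*y| ≤ a^2 + b^2 + 2 := by
  have hl0 : (0:ℝ) ≤ Real.log 2 := Real.log_nonneg (by norm_num)
  have hl1 : Real.log 2 ≤ 1 := by nlinarith [Real.log_two_lt_d9]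
  rw [abs_mul]
  have ha := abs_nonneg a
  have hb := abs_nonneg b
  have hx := abs_nonneg x
  have hy := abs_nonneg y
  nlinarith [_root_.sq_abs a, _root_.sq_abs b, sq_nonneg (|a| - |b|), sq_nonneg (|a| - 1), sq_nonneg (|b| - 1),
    mul_le_mul h1 h2 hy (by positivity)]

lemma absF_pos {θ : ℝ} (h0 : 0 < θ) (h1 : θ < 1) : 0 < ‖1 - e θ‖ := by
  rw [abs_one_sub_e]
  have hπ := Real.pi_pos
  have : 0 < Real.sin (π*θ) :=
    Real.sin_pos_of_pos_of_lt_pi (by positivity) (by nlinarith)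
  rw [_root_.abs_of_pos this]; linarith

lemma absG_pos {θ : ℝ} (h0 : 0 < θ) (h1 : θ < 1) (hh : θ ≠ 1/2) :
    0 < ‖1 + e θ‖ := by
  rw [abs_one_add_e]
  have hπ := Real.pi_pos
  have hne : Real.cos (π*θ) ≠ 0 := by
    rcases lt_or_gt_of_ne hh with hlt | hgt
    · have : 0 < Real.cos (π*θ) :=
        Real.cos_pos_of_mem_Ioo ⟨by nlinarith, by nlinarith⟩
      exact this.ne'
    · have : Real.cos (π*θ) < 0 :=
        Real.cos_neg_of_pi_div_two_lt_of_lt (by nlinarith) (by nlinarith)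
      exact this.ne
  have := abs_pos.mpr hne
  linarith

theorem m_x_minus_one_x_plus_one :
    ∫ θ in (0:ℝ)..1,
      Real.log (‖1 - Complex.exp (2 * π * I * θ)‖) *
      Real.log (‖1 + Complex.exp (2 * π * I * θ)‖)
      = -π^2 / 24 := by
  have hrw : (∫ θ in (0:ℝ)..1,
      Real.log (‖1 - Complex.exp (2 * π * I * θ)‖) *
      Real.log (‖1 + Complex.exp (2 * π * I * θ)‖))
      = ∫ θ in Ioc (0:ℝ) 1,
          Real.log (‖1 - e θ‖) * Real.log (‖1 + e θ‖) := by
    rw [intervalIntegral.integral_of_le (by norm_num : (0:ℝ) ≤ 1)]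
    rfl
  rw [hrw]
  -- the approximating sequence
  set rr : ℕ → ℝ := fun n => 1 - ((n:ℝ)+2)⁻¹ with hrrdef
  have hrhalf : ∀ n, 1/2 ≤ rr n := by
    intro n
    have hn : (0:ℝ) ≤ (n:ℝ) := Nat.cast_nonneg n
    have hpos : (0:ℝ) < (n:ℝ)+2 := by linarith
    have h2 : ((n:ℝ)+2)⁻¹ ≤ 2⁻¹ := by
      apply inv_anti₀ (by norm_num) (by linarith)
    simp only [hrrdef]
    rw [show (1:ℝ)/2 = 1 - 2⁻¹ by norm_num]
    linarith
  have hrlt : ∀ n, rr n < 1 := by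
    intro n
    have hn : (0:ℝ) ≤ (n:ℝ) := Nat.cast_nonneg n
    have : (0:ℝ) < ((n:ℝ)+2)⁻¹ := by positivity
    simp only [hrrdef]; linarith
  have hrnn : ∀ n, 0 ≤ rr n := fun n => le_trans (by norm_num) (hrhalf n)
  have hrlim : Filter.Tendsto rr atTop (nhds 1) := by
    have h1 : Filter.Tendsto (fun n:ℕ => ((n:ℝ)+2)⁻¹) atTop (nhds 0) := by
      apply tendsto_inv_atTop_zero.comp
      apply Filter.tendsto_atTop_add_const_right
      exact tendsto_natCast_atTop_atTop
    have h2 := tendsto_const_nhds (x := (1:ℝ)) (f := atTop (α := ℕ)) |>.sub h1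
    simpa using h2
  -- bound function
  set W : ℝ → ℝ := fun θ => (Real.log (‖1 - e θ‖))^2
      + (Real.log (‖1 + e θ‖))^2 + 2 with hWdef
  have hWint : MeasureTheory.IntegrableOn W (Ioc (0:ℝ) 1) volume := by
    apply MeasureTheory.Integrable.add (intF2.add intG2)
    exact (MeasureTheory.integrableOn_const_iff).mpr (Or.inr (by
      rw [Real.volume_Ioc]; norm_num))
  -- a.e. facts
  have hae : ∀ᵐ θ ∂(volume.restrict (Ioc (0:ℝ) 1)), θ ∈ Ioc (0:ℝ) 1 ∧ θ ≠ 1/2 ∧ θ ≠ 1 := by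
    have h1 : ∀ᵐ θ ∂(volume.restrict (Ioc (0:ℝ) 1)), θ ∈ Ioc (0:ℝ) 1 :=
      MeasureTheory.ae_restrict_mem measurableSet_Ioc
    have h2 : ∀ᵐ (θ:ℝ) ∂volume, θ ≠ 1/2 := by
      refine MeasureTheory.ae_iff.mpr ?_
      have : {θ : ℝ | ¬ θ ≠ 1/2} = {(1/2 : ℝ)} := by ext x; simp
      rw [this]
      exact Real.volume_singleton
    have h3 : ∀ᵐ (θ:ℝ) ∂volume, θ ≠ 1 := by
      refine MeasureTheory.ae_iff.mpr ?_
      have : {θ : ℝ | ¬ θ ≠ 1} = {(1 : ℝ)} := by ext x; simp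
      rw [this]
      exact Real.volume_singleton
    filter_upwards [h1, MeasureTheory.ae_restrict_of_ae h2, MeasureTheory.ae_restrict_of_ae h3]
      with θ ha hb hc
    exact ⟨ha, hb, hc⟩
  -- dominated convergence
  have hDCT : Filter.Tendsto (fun n => ∫ θ in Ioc (0:ℝ) 1,
        Real.log (‖1 - (rr n : ℂ) * e θ‖) *
        Real.log (‖1 + (rr n : ℂ) * e θ‖)) atTop
      (nhds (∫ θ in Ioc (0:ℝ) 1,
        Real.log (‖1 - e θ‖) * Real.log (‖1 + e θ‖))) := by
    apply MeasureTheory.tendsto_integral_of_dominated_convergence W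
    · intro n
      apply Measurable.aestronglyMeasurable
      exact (Real.measurable_log.comp (continuous_norm.comp
          (continuous_const.sub (continuous_const.mul cont_e))).measurable).mul
        (Real.measurable_log.comp (continuous_norm.comp
          (continuous_const.add (continuous_const.mul cont_e))).measurable)
    · exact hWint
    · intro n
      filter_upwards [hae] with θ hθ
      obtain ⟨hmem, hhalf, hone⟩ := hθ
      have h0 : 0 < θ := hmem.1
      have h1 : θ < 1 := lt_of_le_of_ne hmem.2 hone
      have hFpos := absF_pos h0 h1
      have hGpos := absG_pos h0 h1 hhalf
      have b1 := log_abs_bound (hrhalf n) (hrlt n).le (e θ) θ (Or.inl rfl) hFpos.ne'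
      have hz1 : (1 : ℂ) - (rr n:ℂ) * -(e θ) = 1 + (rr n:ℂ) * e θ := by ring
      have hz2 : (1 : ℂ) - -(e θ) = 1 + e θ := by ring
      have b2 := log_abs_bound (hrhalf n) (hrlt n).le (-(e θ)) θ (Or.inr rfl)
        (by rw [hz2]; exact hGpos.ne')
      rw [hz1, hz2] at b2
      rw [Real.norm_eq_abs]
      exact prod_bound b1 b2
    · filter_upwards [hae] with θ hθ
      obtain ⟨hmem, hhalf, hone⟩ := hθ
      have h0 : 0 < θ := hmem.1
      have h1 : θ < 1 := lt_of_le_of_ne hmem.2 hone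
      have hFpos := absF_pos h0 h1
      have hGpos := absG_pos h0 h1 hhalf
      apply Filter.Tendsto.mul
      · have hinner : Continuous (fun r : ℝ => ‖1 - (r:ℂ) * e θ‖) :=
          continuous_norm.comp (continuous_const.sub
            (Complex.continuous_ofReal.mul continuous_const))
        have htt : Filter.Tendsto (fun n => ‖1 - ((rr n):ℂ) * e θ‖) atTop
            (nhds (‖1 - e θ‖)) := by
          have h := ((hinner.tendsto 1)).comp hrlim
          simpa [Function.comp_def] using h
        exact (Real.continuousAt_log hFpos.ne').tendsto.comp htt
      · have hinner : Continuous (fun r : ℝ => ‖1 + (r:ℂ) * e θ‖) :=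
          continuous_norm.comp (continuous_const.add
            (Complex.continuous_ofReal.mul continuous_const))
        have htt : Filter.Tendsto (fun n => ‖1 + ((rr n):ℂ) * e θ‖) atTop
            (nhds (‖1 + e θ‖)) := by
          have h := ((hinner.tendsto 1)).comp hrlim
          simpa [Function.comp_def] using h
        exact (Real.continuousAt_log hGpos.ne').tendsto.comp htt
  -- identify the integrals with the series
  have hEq : ∀ n, (∫ θ in Ioc (0:ℝ) 1,
        Real.log (‖1 - (rr n : ℂ) * e θ‖) *
        Real.log (‖1 + (rr n : ℂ) * e θ‖))
      = ∑' j : ℕ, (-1:ℝ)^j * (rr n)^(2*j) / (2*(j:ℝ)^2) := by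
    intro n
    rw [← intervalIntegral.integral_of_le (by norm_num : (0:ℝ) ≤ 1)]
    exact main_r (hrnn n) (hrlt n)
  -- limit of the series
  have hsumbd : Summable (fun j : ℕ => 1/(j:ℝ)^2) :=
    Real.summable_one_div_nat_pow.mpr one_lt_two
  have hTS : Filter.Tendsto (fun n => ∑' j : ℕ, (-1:ℝ)^j * (rr n)^(2*j) / (2*(j:ℝ)^2)) atTop
      (nhds (∑' j : ℕ, (-1:ℝ)^j / (2*(j:ℝ)^2))) := by
    apply tendsto_tsum_of_dominated_convergence hsumbd
    · intro j
      have hp := hrlim.pow (2*j)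
      have h2 := (hp.const_mul ((-1:ℝ)^j)).div_const (2*(j:ℝ)^2)
      simpa using h2
    · apply Filter.Eventually.of_forall
      intro n j
      rw [Real.norm_eq_abs, abs_div, abs_mul, _root_.abs_pow, _root_.abs_pow, abs_neg, abs_one,
        one_pow, one_mul, _root_.abs_of_nonneg (by positivity : (0:ℝ) ≤ 2*(j:ℝ)^2)]
      rcases Nat.eq_zero_or_pos j with rfl | hj
      · simp
      · have hb : |rr n|^(2*j) ≤ 1 := by
          apply pow_le_one₀ (abs_nonneg _)
          rw [_root_.abs_of_nonneg (hrnn n)]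
          exact (hrlt n).le
        have hjpos : (0:ℝ) < (j:ℝ)^2 := by
          have : (0:ℝ) < (j:ℝ) := by exact_mod_cast hj
          positivity
        rw [div_le_div_iff₀ (by linarith) hjpos]
        nlinarith [pow_nonneg (abs_nonneg (rr n)) (2*j)]
  -- value of the limit series
  have hval : (∑' j : ℕ, (-1:ℝ)^j / (2*(j:ℝ)^2)) = -π^2/24 := by
    have h := eta2.div_const 2
    have heq : (fun n : ℕ => (-1:ℝ)^n / (n:ℝ)^2 / 2) = fun n : ℕ => (-1:ℝ)^n / (2*(n:ℝ)^2) := by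
      funext n; rw [div_div]; ring_nf
    rw [heq] at h
    rw [h.tsum_eq]; ring
  rw [hval] at hTS
  simp only [hEq] at hDCT
  exact tendsto_nhds_unique hDCT hTS
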